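/- If g : [a,b] → ℝ is Riemann integrable, c ∈ ℝ, G(t) := c + ∫_a^t g for t ∈ [a,b], and f is Riemann integrable on the range of G, then (f ∘ G)·g is Riemann integrable on [a,b] and ∫_{G(a)}^{G(b)} f = ∫_a^b (f ∘ G)·g. -/

import Mathlib

open MeasureTheory Set
open Filter Topology Asymptotics
open scoped NNReal ENNReal

/-- Riemann integrability of a bounded function on a set, via the Lebesgue criterion:
`f` is bounded on `s` and continuous (within `s`) at almost every point of `s`. -/
def RiemannIntegrableOn (f : ℝ → ℝ) (s : Set ℝ) : Prop :=
  (∃ C : ℝ, ∀ x ∈ s, |f x| ≤ C) ∧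
    ∀ᵐ x ∂(volume.restrict s), ContinuousWithinAt f s x


lemma kcv_null_of_expanding {G g : ℝ → ℝ} {N : Set ℝ} (hN : volume N = 0) :
    volume {x | HasDerivAt G (g x) x ∧ g x ≠ 0 ∧ G x ∈ N} = 0 := by
  set A := {x | HasDerivAt G (g x) x ∧ g x ≠ 0 ∧ G x ∈ N} with hA
  set S : ℕ → ℤ → Set ℝ := fun n q =>
    {x ∈ A | ∀ y, |y - x| < 2 / (n + 1) → |y - x| / (n + 1) ≤ |G y - G x|}
      ∩ Icc ((q : ℝ) / (n + 1)) ((q + 1 : ℝ) / (n + 1)) with hS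
  have hnpos : ∀ n : ℕ, (0 : ℝ) < n + 1 := fun n => by positivity
  have key : ∀ (n : ℕ) (q : ℤ), volume (S n q) = 0 := by
    intro n q
    have hexp : ∀ x ∈ S n q, ∀ y ∈ S n q, |y - x| / (n + 1) ≤ |G y - G x| := by
      intro x hx y hy
      refine hx.1.2 y ?_
      have h1 : x ∈ Icc ((q : ℝ) / (n + 1)) ((q + 1 : ℝ) / (n + 1)) := hx.2
      have h2 : y ∈ Icc ((q : ℝ) / (n + 1)) ((q + 1 : ℝ) / (n + 1)) := hy.2
      have hw : ((q : ℝ) + 1) / (n + 1) - (q : ℝ) / (n + 1) = 1 / (n + 1) := by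
        field_simp
        ring
      have : |y - x| ≤ 1 / (n + 1) := by
        rw [abs_sub_le_iff]
        constructor <;> linarith [h1.1, h1.2, h2.1, h2.2]
      have h3 : (1 : ℝ) / (n + 1) < 2 / (n + 1) := by
        apply (div_lt_div_iff_of_pos_right (hnpos n)).mpr one_lt_two
      linarith
    have hinj : Set.InjOn G (S n q) := by
      intro x hx y hy hxy
      have := hexp x hx y hy
      rw [hxy, sub_self, abs_zero] at this
      have h0 : |y - x| ≤ 0 := by
        have := (div_le_iff₀ (hnpos n)).mp this
        linarith
      have h1 := abs_nonneg (y - x)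
      have h2 : |y - x| = 0 := le_antisymm h0 h1
      have h3 := abs_eq_zero.mp h2
      linarith [sub_eq_zero.mp h3]
    have himg : G '' S n q ⊆ N := by
      rintro _ ⟨x, hx, rfl⟩
      exact hx.1.1.2.2
    set φ := Function.invFunOn G (S n q) with hφ
    have hGim : ∀ u ∈ G '' S n q, φ u ∈ S n q ∧ G (φ u) = u := by
      rintro u ⟨x, hx, rfl⟩
      exact ⟨Function.invFunOn_mem ⟨x, hx, rfl⟩, Function.invFunOn_eq ⟨x, hx, rfl⟩⟩
    have hlip : LipschitzOnWith ((n : ℝ≥0) + 1) φ (G '' S n q) := by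
      apply LipschitzOnWith.of_dist_le_mul
      intro u hu v hv
      obtain ⟨hu1, hu2⟩ := hGim u hu
      obtain ⟨hv1, hv2⟩ := hGim v hv
      have h5 := hexp (φ v) hv1 (φ u) hu1
      rw [hu2, hv2] at h5
      rw [Real.dist_eq, Real.dist_eq]
      have h6 := (div_le_iff₀ (hnpos n)).mp h5
      push_cast
      linarith [h6]
    have himeq : φ '' (G '' S n q) = S n q :=
      hinj.invFunOn_image (le_refl (S n q))
    have hH := hlip.hausdorffMeasure_image_le (zero_le_one : (0:ℝ) ≤ 1)
    rw [himeq] at hH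
    rw [← MeasureTheory.hausdorffMeasure_real]
    refine le_antisymm ?_ zero_le
    calc μH[1] (S n q) ≤ (((n : ℝ≥0) + 1 : ℝ≥0) : ℝ≥0∞) ^ (1:ℝ) * μH[1] (G '' S n q) := hH
      _ ≤ (((n : ℝ≥0) + 1 : ℝ≥0) : ℝ≥0∞) ^ (1:ℝ) * μH[1] N := by
          exact mul_le_mul_right (measure_mono himg) _
      _ = 0 := by
          rw [MeasureTheory.hausdorffMeasure_real, hN, mul_zero]
  have hcover : A ⊆ ⋃ (n : ℕ) (q : ℤ), S n q := by
    intro x hx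
    obtain ⟨hxd, hxg, hxN⟩ := hx
    have hc : 0 < |g x| := abs_pos.mpr hxg
    have hlo := (hasDerivAt_iff_isLittleO.mp hxd).def (half_pos hc)
    rw [Metric.eventually_nhds_iff] at hlo
    obtain ⟨δ, hδ, hball⟩ := hlo
    obtain ⟨n, hn⟩ := exists_nat_one_div_lt (show (0:ℝ) < min (δ / 2) (|g x| / 2) from
      lt_min (by linarith) (by linarith))
    have hn1 : (1:ℝ) / (n + 1) < δ / 2 := hn.trans_le (min_le_left _ _)
    have hn2 : (1:ℝ) / (n + 1) < |g x| / 2 := hn.trans_le (min_le_right _ _)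
    have hxin : x ∈ S n ⌊x * (n + 1)⌋ := by
      constructor
      · refine ⟨⟨hxd, hxg, hxN⟩, ?_⟩
        intro y hy
        have hyd : dist y x < δ := by
          rw [Real.dist_eq]
          calc |y - x| < 2 / (n+1) := hy
            _ = 2 * (1 / (n+1)) := by ring
            _ < 2 * (δ/2) := by linarith
            _ = δ := by ring
        have hb := hball hyd
        simp only [smul_eq_mul] at hb
        have habs : |G y - G x| ≥ |(y - x) * g x| - |G y - G x - (y - x) * g x| := by
          have h1 := abs_sub_abs_le_abs_sub ((y - x) * g x) (G y - G x)
          have h2 := abs_sub_comm ((y - x) * g x) (G y - G x)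
          linarith
        have hb' : ‖G y - G x - (y - x) * g x‖ ≤ |g x| / 2 * ‖y - x‖ := hb
        rw [Real.norm_eq_abs, Real.norm_eq_abs] at hb'
        have hmul : |(y - x) * g x| = |y - x| * |g x| := abs_mul _ _
        have : |G y - G x| ≥ |y - x| * (|g x| / 2) := by
          nlinarith [abs_nonneg (y - x)]
        calc |y - x| / (n + 1) = |y - x| * (1 / (n + 1)) := by ring
          _ ≤ |y - x| * (|g x| / 2) := by
              apply mul_le_mul_of_nonneg_left (le_of_lt hn2) (abs_nonneg _)
          _ ≤ |G y - G x| := this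
      · constructor
        · rw [div_le_iff₀ (hnpos n)]
          exact Int.floor_le (x * (n + 1))
        · rw [le_div_iff₀ (hnpos n)]
          exact le_of_lt (Int.lt_floor_add_one (x * (n + 1)))
    exact mem_iUnion.mpr ⟨n, mem_iUnion.mpr ⟨⌊x * (n+1)⌋, hxin⟩⟩
  exact measure_mono_null hcover
    (measure_iUnion_null fun n => measure_iUnion_null fun q => key n q)


lemma kcv_aesm {f : ℝ → ℝ} {s : Set ℝ} (hs : MeasurableSet s)
    (h : ∀ᵐ x ∂(volume.restrict s), ContinuousWithinAt f s x) :
    AEStronglyMeasurable f (volume.restrict s) := by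
  rw [aestronglyMeasurable_iff_aemeasurable]
  set B := {x | ¬ ContinuousWithinAt f s x} with hB
  have hB0 : volume.restrict s B = 0 := h
  set Z := toMeasurable (volume.restrict s) B with hZ
  have hZm : MeasurableSet Z := measurableSet_toMeasurable _ _
  have hZ0 : volume.restrict s Z = 0 := by
    rw [hZ, measure_toMeasurable]; exact hB0
  have hsZ0 : volume (s ∩ Z) = 0 := by
    rw [Measure.restrict_apply hZm] at hZ0
    rwa [inter_comm]
  set K := s \ Z with hK
  have hKm : MeasurableSet K := hs.diff hZm
  have hcont : ContinuousOn f K := by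
    intro x hx
    have hxB : x ∉ B := fun hxB => hx.2 (subset_toMeasurable _ _ hxB)
    have : ContinuousWithinAt f s x := not_not.mp hxB
    exact this.mono diff_subset
  have h1 : AEMeasurable f (volume.restrict K) := hcont.aemeasurable hKm
  have h2 : AEMeasurable f (volume.restrict (s ∩ Z)) := by
    rw [Measure.restrict_eq_zero.mpr hsZ0]
    exact aemeasurable_zero_measure
  have hsub : s ⊆ K ∪ (s ∩ Z) := by
    intro x hx
    by_cases hxZ : x ∈ Z
    · exact Or.inr ⟨hx, hxZ⟩
    · exact Or.inl ⟨hx, hxZ⟩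
  have h3 : AEMeasurable f (volume.restrict (K ∪ (s ∩ Z))) :=
    (aemeasurable_union_iff.mpr ⟨h1, h2⟩)
  exact h3.mono_measure (Measure.restrict_mono hsub le_rfl)


lemma kcv_intervalIntegrable {f : ℝ → ℝ} {m M : ℝ} (hf : IntegrableOn f (Icc m M))
    {p q : ℝ} (hp : p ∈ Icc m M) (hq : q ∈ Icc m M) :
    IntervalIntegrable f volume p q := by
  rw [intervalIntegrable_iff]
  exact hf.mono_set ((uIoc_subset_uIcc).trans (uIcc_subset_Icc hp hq))

lemma kcv_primitive_deriv {f : ℝ → ℝ} {m M c u : ℝ}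
    (hc : c ∈ Icc m M) (hu : u ∈ Icc m M)
    (hf : IntegrableOn f (Icc m M))
    (hcont : ContinuousWithinAt f (Icc m M) u) :
    HasDerivWithinAt (fun v => ∫ y in c..v, f y) (f u) (Icc m M) u := by
  have hright : HasDerivWithinAt (fun v => ∫ y in c..v, f y) (f u) (Icc u M) u := by
    rcases eq_or_lt_of_le hu.2 with h | h
    · have hsing : Icc u M = {u} := by rw [h, Icc_self]
      rw [hsing, hasDerivWithinAt_iff_tendsto_slope]
      simp [nhdsWithin_empty]
    · have h𝓝 : 𝓝[Icc u M] u = 𝓝[Set.Ici u] u := nhdsWithin_Icc_eq_nhdsGE h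
      have hcont' : ContinuousWithinAt f (Set.Ici u) u := by
        have h2 : Tendsto f (𝓝[Icc u M] u) (𝓝 (f u)) := hcont.mono (Icc_subset_Icc hu.1 le_rfl)
        rwa [h𝓝] at h2
      have hmeas : StronglyMeasurableAtFilter f (𝓝[Set.Ioi u] u) volume := by
        refine ⟨Icc u M, ?_, (hf.mono_set (Icc_subset_Icc hu.1 le_rfl)).aestronglyMeasurable⟩
        exact nhdsWithin_mono u Ioi_subset_Ici_self (by rw [← h𝓝]; exact self_mem_nhdsWithin)
      exact (intervalIntegral.integral_hasDerivWithinAt_right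
        (kcv_intervalIntegrable hf hc hu) hmeas
        (hcont'.mono Ioi_subset_Ici_self)).mono Icc_subset_Ici_self
  have hleft : HasDerivWithinAt (fun v => ∫ y in c..v, f y) (f u) (Icc m u) u := by
    rcases eq_or_lt_of_le hu.1 with h | h
    · have hsing : Icc m u = {u} := by rw [← h, Icc_self]
      rw [hsing, hasDerivWithinAt_iff_tendsto_slope]
      simp [nhdsWithin_empty]
    · have h𝓝 : 𝓝[Icc m u] u = 𝓝[Set.Iic u] u := nhdsWithin_Icc_eq_nhdsLE h
      have hcont' : ContinuousWithinAt f (Set.Iic u) u := by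
        have h2 : Tendsto f (𝓝[Icc m u] u) (𝓝 (f u)) := hcont.mono (Icc_subset_Icc le_rfl hu.2)
        rwa [h𝓝] at h2
      have hmeas : StronglyMeasurableAtFilter f (𝓝[Set.Iic u] u) volume := by
        refine ⟨Icc m u, ?_, (hf.mono_set (Icc_subset_Icc le_rfl hu.2)).aestronglyMeasurable⟩
        rw [← h𝓝]; exact self_mem_nhdsWithin
      exact (intervalIntegral.integral_hasDerivWithinAt_right
        (kcv_intervalIntegrable hf hc hu) hmeas hcont').mono Icc_subset_Iic_self
  have := hleft.union hright
  rwa [Icc_union_Icc_eq_Icc hu.1 hu.2] at this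


lemma kcv_lipschitz_ftc {H φ : ℝ → ℝ} {K : ℝ≥0} {a b : ℝ} (hab : a ≤ b)
    (hH : LipschitzWith K H)
    (hφ : ∀ᵐ t : ℝ, t ∈ Ioo a b → HasDerivAt H (φ t) t) :
    ∫ t in Icc a b, φ t = H b - H a := by
  have hHc : Continuous H := hH.continuous
  set δ : ℕ → ℝ := fun n => 1 / (n + 1) with hδ
  have hδpos : ∀ n, 0 < δ n := fun n => by positivity
  set h : ℕ → ℝ → ℝ := fun n t => (H (t + δ n) - H t) / δ n with hh
  have hbound : ∀ n t, ‖h n t‖ ≤ (K : ℝ) := by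
    intro n t
    have hd := hH.dist_le_mul (t + δ n) t
    rw [Real.dist_eq, Real.dist_eq, add_sub_cancel_left, abs_of_pos (hδpos n)] at hd
    rw [hh]
    simp only [Real.norm_eq_abs, abs_div, abs_of_pos (hδpos n)]
    rw [div_le_iff₀ (hδpos n)]
    exact hd
  have htendsto_seq : ∀ x : ℝ, Tendsto (fun n => x + δ n) atTop (𝓝[≠] x) := by
    intro x
    apply tendsto_nhdsWithin_of_tendsto_nhds_of_eventually_within
    · have h0 : Tendsto δ atTop (𝓝 0) := tendsto_one_div_add_atTop_nhds_zero_nat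
      have := tendsto_const_nhds.add h0 (f := fun _ : ℕ => x)
      simpa using this
    · exact Eventually.of_forall fun n => by
        simp only [mem_compl_iff, mem_singleton_iff]
        exact fun hc => (hδpos n).ne' (by linarith)
  have hslope : ∀ {P : ℝ → ℝ} {x d : ℝ}, HasDerivAt P d x →
      Tendsto (fun n => (P (x + δ n) - P x) / δ n) atTop (𝓝 d) := by
    intro P x d hP
    have h2 := (hasDerivAt_iff_tendsto_slope.mp hP).comp (htendsto_seq x)
    have h3 : (slope P x ∘ fun n => x + δ n) = fun n => (P (x + δ n) - P x) / δ n := by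
      funext n
      simp only [Function.comp, slope_def_field, add_sub_cancel_left]
    rwa [h3] at h2
  have hmeasn : ∀ n, AEStronglyMeasurable (h n) (volume.restrict (Icc a b)) := by
    intro n
    exact (((hHc.comp (continuous_id.add continuous_const)).sub hHc).div_const _).aestronglyMeasurable
  have hIoo : ∀ᵐ t ∂(volume.restrict (Icc a b)), t ∈ Ioo a b := by
    have h1 : ∀ᵐ t ∂(volume.restrict (Icc a b)), t ∈ Icc a b :=
      ae_restrict_mem measurableSet_Icc
    have h2 : ∀ᵐ t : ℝ, t ∉ ({a, b} : Set ℝ) :=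
      measure_eq_zero_iff_ae_notMem.mp (((Set.finite_singleton b).insert a).measure_zero _)
    filter_upwards [h1, ae_restrict_of_ae h2] with t ht hab'
    simp only [mem_insert_iff, mem_singleton_iff, not_or] at hab'
    exact ⟨lt_of_le_of_ne ht.1 (Ne.symm hab'.1), lt_of_le_of_ne ht.2 hab'.2⟩
  have hae : ∀ᵐ t ∂(volume.restrict (Icc a b)), Tendsto (fun n => h n t) atTop (𝓝 (φ t)) := by
    filter_upwards [hIoo, ae_restrict_of_ae hφ] with t ht hd
    exact hslope (hd ht)
  have hDCT := tendsto_integral_of_dominated_convergence (fun _ => (K : ℝ)) hmeasn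
    (integrable_const _) (fun n => Eventually.of_forall fun t => hbound n t) hae
  set P : ℝ → ℝ := fun u => ∫ x in a..u, H x with hP
  have hIInt : ∀ p q : ℝ, IntervalIntegrable H volume p q := fun p q => hHc.intervalIntegrable (μ := volume) p q
  have key : ∀ n, ∫ t in Icc a b, h n t =
      (P (b + δ n) - P b) / δ n - (P (a + δ n) - P a) / δ n := by
    intro n
    have h1 : ∫ t in Icc a b, h n t = ∫ t in a..b, h n t := by
      rw [MeasureTheory.integral_Icc_eq_integral_Ioc, intervalIntegral.integral_of_le hab]
    have hint1 : IntervalIntegrable (fun t => H (t + δ n)) volume a b := by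
      exact (hHc.comp (continuous_id.add continuous_const)).intervalIntegrable a b
    have h2 : ∫ t in a..b, h n t =
        ((∫ t in a..b, H (t + δ n)) - ∫ t in a..b, H t) / δ n := by
      rw [← intervalIntegral.integral_sub hint1 (hIInt a b), ← intervalIntegral.integral_div]
    have h3 : ∫ t in a..b, H (t + δ n) = ∫ x in (a + δ n)..(b + δ n), H x :=
      intervalIntegral.integral_comp_add_right (f := H) (δ n)
    have h4 : ∫ x in (a + δ n)..(b + δ n), H x = P (b + δ n) - P (a + δ n) :=
      (intervalIntegral.integral_interval_sub_left (hIInt a (b + δ n))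
        (hIInt a (a + δ n))).symm
    have h5 : P a = 0 := intervalIntegral.integral_same
    have h6 : P b = ∫ t in a..b, H t := rfl
    rw [h1, h2, h3, h4, h5, h6]
    ring
  have hlim2 : Tendsto (fun n => ∫ t in Icc a b, h n t) atTop (𝓝 (H b - H a)) := by
    have hPb : HasDerivAt P (H b) b := (hHc.integral_hasStrictDerivAt a b).hasDerivAt
    have hPa : HasDerivAt P (H a) a := (hHc.integral_hasStrictDerivAt a a).hasDerivAt
    have := (hslope hPb).sub (hslope hPa)
    apply this.congr
    intro n
    rw [key n]
  exact tendsto_nhds_unique hDCT hlim2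

/-- Kestelman's change of variables theorem. -/
theorem kestelman_change_of_variables (a b c : ℝ) (hab : a ≤ b)
    (g G f : ℝ → ℝ)
    (hg : RiemannIntegrableOn g (Icc a b))
    (hG : ∀ t ∈ Icc a b, G t = c + ∫ x in a..t, g x)
    (hf : RiemannIntegrableOn f (G '' Icc a b)) :
    RiemannIntegrableOn (fun t => f (G t) * g t) (Icc a b) ∧
      ∫ y in G a..G b, f y = ∫ t in a..b, f (G t) * g t := by
  obtain ⟨⟨C, hC⟩, hfc⟩ := hf
  obtain ⟨⟨D, hD⟩, hgc⟩ := hg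
  have hC0 : 0 ≤ C := le_trans (abs_nonneg _) (hC (G a) ⟨a, ⟨le_rfl, hab⟩, rfl⟩)
  have hD0 : 0 ≤ D := le_trans (abs_nonneg _) (hD a ⟨le_rfl, hab⟩)
  have hgm : AEStronglyMeasurable g (volume.restrict (Icc a b)) :=
    kcv_aesm measurableSet_Icc hgc
  have hgi : IntegrableOn g (Icc a b) := by
    refine ⟨hgm, HasFiniteIntegral.restrict_of_bounded (C := D)
      measure_Icc_lt_top ?_⟩
    refine (ae_restrict_iff' measurableSet_Icc).mpr (Eventually.of_forall fun t ht => ?_)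
    rw [Real.norm_eq_abs]; exact hD t ht
  set clamp : ℝ → ℝ := fun t => max a (min t b) with hclamp
  have hclamp_mem : ∀ t, clamp t ∈ Icc a b :=
    fun t => ⟨le_max_left _ _, max_le hab (min_le_right t b)⟩
  have hclamp_id : ∀ t ∈ Icc a b, clamp t = t := by
    intro t ht
    rw [hclamp]; simp only
    rw [min_eq_left ht.2, max_eq_right ht.1]
  set myG : ℝ → ℝ := fun t => c + ∫ x in a..(clamp t), g x with hmyG
  have hGeq : EqOn G myG (Icc a b) := by
    intro t ht
    rw [hmyG]; simp only
    rw [hclamp_id t ht]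
    exact hG t ht
  have hIg : ∀ p ∈ Icc a b, ∀ q ∈ Icc a b, IntervalIntegrable g volume p q :=
    fun p hp q hq => kcv_intervalIntegrable hgi hp hq
  have hmyG_sub : ∀ s t : ℝ, myG s - myG t = ∫ x in (clamp t)..(clamp s), g x := by
    intro s t
    rw [hmyG]; simp only
    rw [add_sub_add_left_eq_sub]
    exact intervalIntegral.integral_interval_sub_left
      (hIg a ⟨le_rfl, hab⟩ (clamp s) (hclamp_mem s))
      (hIg a ⟨le_rfl, hab⟩ (clamp t) (hclamp_mem t))
  have hclip : ∀ s t : ℝ, |clamp s - clamp t| ≤ |s - t| := by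
    intro s t
    rw [hclamp]; simp only
    have h1 : |max a (min s b) - max a (min t b)| ≤ |min s b - min t b| := by
      rw [max_comm a (min s b), max_comm a (min t b)]
      exact abs_max_sub_max_le_abs _ _ _
    have h2 : |min s b - min t b| ≤ |s - t| := by
      have := abs_min_sub_min_le_max s b t b
      simpa [abs_nonneg] using this.trans (max_le le_rfl (by simp [abs_nonneg, sub_self]))
    exact h1.trans h2
  have hmyG_dist : ∀ s t : ℝ, |myG s - myG t| ≤ D * |s - t| := by
    intro s t
    rw [hmyG_sub s t]
    have hb : |∫ x in (clamp t)..(clamp s), g x| ≤ D * |clamp s - clamp t| := by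
      rw [← Real.norm_eq_abs]
      apply intervalIntegral.norm_integral_le_of_norm_le_const
      intro x hx
      rw [Real.norm_eq_abs]
      exact hD x ((uIoc_subset_uIcc.trans (uIcc_subset_Icc (hclamp_mem t) (hclamp_mem s))) hx)
    exact hb.trans (mul_le_mul_of_nonneg_left (hclip s t) hD0)
  have hmyG_lip : LipschitzWith (Real.toNNReal D) myG := by
    apply LipschitzWith.of_dist_le_mul
    intro s t
    rw [Real.dist_eq, Real.dist_eq, Real.coe_toNNReal D hD0]
    exact hmyG_dist s t
  have hmyGc : Continuous myG := hmyG_lip.continuous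
  set J := myG '' Icc a b with hJ
  have hJG : G '' Icc a b = J := hGeq.image_eq
  have hJcomp : IsCompact J := isCompact_Icc.image hmyGc
  have hJm : MeasurableSet J := hJcomp.measurableSet
  have hJIcc : J = Icc (sInf J) (sSup J) :=
    eq_Icc_of_connected_compact
      ⟨(nonempty_Icc.mpr hab).image _, isPreconnected_Icc.image _ hmyGc.continuousOn⟩ hJcomp
  set m := sInf J with hm
  set M := sSup J with hM
  have hmemJ : ∀ t, myG t ∈ J := by
    intro t
    have h1 : myG t = myG (clamp t) := by
      rw [hmyG]; simp only
      rw [hclamp_id (clamp t) (hclamp_mem t)]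
    rw [h1]
    exact mem_image_of_mem _ (hclamp_mem t)
  have hmemIcc : ∀ t, myG t ∈ Icc m M := fun t => hJIcc ▸ hmemJ t
  rw [hJG] at hC hfc
  have hfm : AEStronglyMeasurable f (volume.restrict J) := kcv_aesm hJm hfc
  have hfi : IntegrableOn f J := by
    refine ⟨hfm, HasFiniteIntegral.restrict_of_bounded (C := C) hJcomp.measure_lt_top ?_⟩
    refine (ae_restrict_iff' hJm).mpr (Eventually.of_forall fun u hu => ?_)
    rw [Real.norm_eq_abs]; exact hC u hu
  have hfiIcc : IntegrableOn f (Icc m M) := by rw [← hJIcc]; exact hfi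
  set F : ℝ → ℝ := fun u => ∫ y in (myG a)..u, f y with hF
  have haJ : myG a ∈ Icc m M := hmemIcc a
  have hFsub : ∀ u v : ℝ, u ∈ Icc m M → v ∈ Icc m M → F u - F v = ∫ y in v..u, f y := by
    intro u v hu hv
    rw [hF]; simp only
    exact intervalIntegral.integral_interval_sub_left
      (kcv_intervalIntegrable hfiIcc haJ hu) (kcv_intervalIntegrable hfiIcc haJ hv)
  have hFlip : ∀ u v : ℝ, u ∈ Icc m M → v ∈ Icc m M → |F u - F v| ≤ C * |u - v| := by
    intro u v hu hv
    rw [hFsub u v hu hv, ← Real.norm_eq_abs]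
    apply intervalIntegral.norm_integral_le_of_norm_le_const
    intro x hx
    rw [Real.norm_eq_abs]
    refine hC x ?_
    rw [hJIcc]
    exact (uIoc_subset_uIcc.trans (uIcc_subset_Icc hv hu)) hx
  set H : ℝ → ℝ := fun t => F (myG t) with hHdef
  have hHlip : LipschitzWith (Real.toNNReal C * Real.toNNReal D) H := by
    apply LipschitzWith.of_dist_le_mul
    intro s t
    rw [Real.dist_eq, Real.dist_eq]
    push_cast
    rw [Real.coe_toNNReal C hC0, Real.coe_toNNReal D hD0]
    calc |H s - H t| ≤ C * |myG s - myG t| := hFlip _ _ (hmemIcc s) (hmemIcc t)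
      _ ≤ C * (D * |s - t|) := mul_le_mul_of_nonneg_left (hmyG_dist s t) hC0
      _ = C * D * |s - t| := by ring
  set N := {u | ¬ ContinuousWithinAt f J u} ∩ J with hN
  have hN0 : volume N = 0 := by
    have h1 : volume.restrict J {u | ¬ ContinuousWithinAt f J u} = 0 := hfc
    rw [Measure.restrict_apply' hJm] at h1
    exact h1
  have hA0 : volume {x | HasDerivAt myG (g x) x ∧ g x ≠ 0 ∧ myG x ∈ N} = 0 :=
    kcv_null_of_expanding hN0
  have hg_bad : volume ({t | ¬ ContinuousWithinAt g (Icc a b) t} ∩ Icc a b) = 0 := by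
    have h1 : volume.restrict (Icc a b) {t | ¬ ContinuousWithinAt g (Icc a b) t} = 0 := hgc
    rw [Measure.restrict_apply' measurableSet_Icc] at h1
    exact h1
  have key : ∀ᵐ t : ℝ, t ∈ Ioo a b →
      (HasDerivAt H (f (myG t) * g t) t ∧
        ContinuousWithinAt (fun s => f (myG s) * g s) (Icc a b) t) := by
    filter_upwards [measure_eq_zero_iff_ae_notMem.mp hg_bad, measure_eq_zero_iff_ae_notMem.mp hA0]
      with t ht1 ht2 htIoo
    have htIcc : t ∈ Icc a b := Ioo_subset_Icc_self htIoo
    have hgwt : ContinuousWithinAt g (Icc a b) t := by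
      by_contra hcon; exact ht1 ⟨hcon, htIcc⟩
    have hIccnb : Icc a b ∈ 𝓝 t := Icc_mem_nhds htIoo.1 htIoo.2
    have hgat : ContinuousAt g t := hgwt.continuousAt hIccnb
    have hprim : HasDerivAt (fun u => ∫ x in a..u, g x) (g t) t :=
      intervalIntegral.integral_hasDerivAt_right (hIg a ⟨le_rfl, hab⟩ t htIcc)
        ⟨Icc a b, hIccnb, hgm⟩ hgat
    have hmyGev : myG =ᶠ[𝓝 t] (fun u => c + ∫ x in a..u, g x) := by
      filter_upwards [hIccnb] with u hu
      rw [hmyG]; simp only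
      rw [hclamp_id u hu]
    have hGd : HasDerivAt myG (g t) t :=
      (hprim.const_add c).congr_of_eventuallyEq hmyGev
    rcases eq_or_ne (g t) 0 with hg0 | hg0
    · constructor
      · have hz : f (myG t) * g t = 0 := by rw [hg0, mul_zero]
        rw [hz, hasDerivAt_iff_isLittleO]
        simp only [smul_zero, sub_zero]
        have hGd0 : HasDerivAt myG 0 t := hg0 ▸ hGd
        have hO : (fun s => H s - H t) =O[𝓝 t] (fun s => myG s - myG t) :=
          Asymptotics.IsBigO.of_bound C (Eventually.of_forall fun s => by
            rw [Real.norm_eq_abs, Real.norm_eq_abs]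
            exact hFlip _ _ (hmemIcc s) (hmemIcc t))
        have hlo := hasDerivAt_iff_isLittleO.mp hGd0
        simp only [smul_zero, sub_zero] at hlo
        exact hO.trans_isLittleO hlo
      · have hz : f (myG t) * g t = 0 := by rw [hg0, mul_zero]
        unfold ContinuousWithinAt
        have hz' : (fun s => f (myG s) * g s) t = 0 := hz
        rw [hz']
        apply squeeze_zero_norm (a := fun s => C * |g s|)
        · intro s
          rw [Real.norm_eq_abs, abs_mul]
          exact mul_le_mul_of_nonneg_right (hC _ (hJ ▸ hmemJ s)) (abs_nonneg _)
        · have h5 : Tendsto (fun s => C * |g s|) (𝓝[Icc a b] t) (𝓝 (C * |g t|)) :=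
            (hgwt.abs).const_mul C
          rw [hg0, abs_zero, mul_zero] at h5
          exact h5
    · have hfNt : ContinuousWithinAt f J (myG t) := by
        by_contra hcon
        exact ht2 ⟨hGd, hg0, ⟨hcon, hmemJ t⟩⟩
      have hfwIcc : ContinuousWithinAt f (Icc m M) (myG t) := by
        rw [← hJIcc]; exact hfNt
      have hFd : HasDerivWithinAt F (f (myG t)) (Icc m M) (myG t) :=
        kcv_primitive_deriv haJ (hmemIcc t) hfiIcc hfwIcc
      constructor
      · have hGdw : HasDerivWithinAt myG (g t) (Icc a b) t := hGd.hasDerivWithinAt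
        have hcomp : HasDerivWithinAt (F ∘ myG) (f (myG t) * g t) (Icc a b) t :=
          hFd.comp t hGdw (fun s _ => hmemIcc s)
        exact hcomp.hasDerivAt hIccnb
      · have hc1 : ContinuousWithinAt (fun s => f (myG s)) (Icc a b) t :=
          hfNt.comp hmyGc.continuousWithinAt (fun s _ => hmemJ s)
        exact hc1.mul hgwt
  have hIoo : ∀ᵐ t ∂(volume.restrict (Icc a b)), t ∈ Ioo a b := by
    have h1 : ∀ᵐ t ∂(volume.restrict (Icc a b)), t ∈ Icc a b :=
      ae_restrict_mem measurableSet_Icc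
    have h2 : ∀ᵐ t : ℝ, t ∉ ({a, b} : Set ℝ) :=
      measure_eq_zero_iff_ae_notMem.mp (((Set.finite_singleton b).insert a).measure_zero _)
    filter_upwards [h1, ae_restrict_of_ae h2] with t ht hab'
    simp only [mem_insert_iff, mem_singleton_iff, not_or] at hab'
    exact ⟨lt_of_le_of_ne ht.1 (Ne.symm hab'.1), lt_of_le_of_ne ht.2 hab'.2⟩
  constructor
  · constructor
    · refine ⟨C * D, fun t ht => ?_⟩
      rw [abs_mul]
      refine mul_le_mul (hC _ ?_) (hD t ht) (abs_nonneg _) hC0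
      rw [← hJG]
      exact mem_image_of_mem _ ht
    · filter_upwards [hIoo, ae_restrict_of_ae key] with t ht hk
      exact ((hk ht).2).congr (fun s hs => by rw [hGeq hs]) (by rw [hGeq (Ioo_subset_Icc_self ht)])
  · have hend_a : G a = myG a := hGeq ⟨le_rfl, hab⟩
    have hend_b : G b = myG b := hGeq ⟨hab, le_rfl⟩
    have hftc : ∫ t in Icc a b, f (myG t) * g t = H b - H a :=
      kcv_lipschitz_ftc hab hHlip (key.mono fun t h ht => (h ht).1)
    have hHb : H b = ∫ y in (myG a)..(myG b), f y := rfl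
    have hHa : H a = 0 := intervalIntegral.integral_same
    have hIcc_int : ∫ t in Icc a b, f (myG t) * g t = ∫ t in a..b, f (myG t) * g t := by
      rw [MeasureTheory.integral_Icc_eq_integral_Ioc, intervalIntegral.integral_of_le hab]
    have hcongr : ∫ t in a..b, f (G t) * g t = ∫ t in a..b, f (myG t) * g t := by
      apply intervalIntegral.integral_congr
      intro t ht
      rw [uIcc_of_le hab] at ht
      simp only
      rw [hGeq ht]
    rw [hend_a, hend_b, hcongr]
    calc ∫ y in (myG a)..(myG b), f y = H b - H a := by rw [hHb, hHa, sub_zero]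
      _ = ∫ t in Icc a b, f (myG t) * g t := hftc.symm
      _ = ∫ t in a..b, f (myG t) * g t := hIcc_int
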